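/- Let X = {x_1,...,x_n} ⊂ ℝ², M its centroid, and s* the minimiser of P(s) = Σ_i ‖s-x_i‖² + max_i ‖s-x_i‖². Then M = s* if and only if M is the 1-centre of X (i.e., M minimises s ↦ max_i ‖s - x_i‖). -/

import Mathlib

open Finset

lemma parallel_axis' {n : ℕ} [NeZero n] (x : Fin n → EuclideanSpace ℝ (Fin 2))
    (M : EuclideanSpace ℝ (Fin 2)) (hM : M = (n : ℝ)⁻¹ • ∑ i, x i)
    (t : EuclideanSpace ℝ (Fin 2)) :
    ∑ i, ‖t - x i‖ ^ 2 = (n : ℝ) * ‖t - M‖ ^ 2 + ∑ i, ‖M - x i‖ ^ 2 := by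
  have hn : (n : ℝ) ≠ 0 := Nat.cast_ne_zero.2 (NeZero.ne n)
  have hMs : (n : ℝ) • M = ∑ i, x i := by
    rw [hM, smul_smul, mul_inv_cancel₀ hn, one_smul]
  have hsum : ∑ i, (M - x i) = 0 := by
    rw [Finset.sum_sub_distrib, Finset.sum_const, card_univ, Fintype.card_fin,
      ← Nat.cast_smul_eq_nsmul ℝ, hMs, sub_self]
  have key : ∀ i : Fin n, ‖t - x i‖ ^ 2
      = ‖t - M‖ ^ 2 + 2 * (inner ℝ (t - M) (M - x i) : ℝ) + ‖M - x i‖ ^ 2 := by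
    intro i
    have h : t - x i = (t - M) + (M - x i) := by abel
    rw [h, norm_add_sq_real]
  rw [Finset.sum_congr rfl (fun i _ => key i)]
  rw [Finset.sum_add_distrib, Finset.sum_add_distrib, Finset.sum_const, card_univ,
    Fintype.card_fin, ← Finset.mul_sum, ← inner_sum, hsum, inner_zero_right,
    mul_zero, add_zero, nsmul_eq_mul]

lemma sup_sq' {n : ℕ} [NeZero n] (f : Fin n → ℝ) (hf : ∀ i, 0 ≤ f i) :
    Finset.univ.sup' Finset.univ_nonempty (fun i => f i ^ 2)
      = (Finset.univ.sup' Finset.univ_nonempty f) ^ 2 := by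
  apply le_antisymm
  · apply Finset.sup'_le
    intro i _
    exact pow_le_pow_left₀ (hf i) (Finset.le_sup' f (mem_univ i)) 2
  · obtain ⟨i, _, hi⟩ := Finset.exists_mem_eq_sup' Finset.univ_nonempty f
    rw [hi]
    exact Finset.le_sup' (fun i => f i ^ 2) (mem_univ i)

lemma conv_max' {n : ℕ} [NeZero n] (x : Fin n → EuclideanSpace ℝ (Fin 2))
    (M t : EuclideanSpace ℝ (Fin 2)) (ε : ℝ) (h0 : 0 ≤ ε) (h1 : ε ≤ 1) :
    Finset.univ.sup' Finset.univ_nonempty (fun i => ‖M + ε • (t - M) - x i‖)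
      ≤ (1 - ε) * Finset.univ.sup' Finset.univ_nonempty (fun i => ‖M - x i‖)
        + ε * Finset.univ.sup' Finset.univ_nonempty (fun i => ‖t - x i‖) := by
  apply Finset.sup'_le
  intro i _
  have h : M + ε • (t - M) - x i = (1 - ε) • (M - x i) + ε • (t - x i) := by
    module
  rw [h]
  calc ‖(1 - ε) • (M - x i) + ε • (t - x i)‖
      ≤ (1 - ε) * ‖M - x i‖ + ε * ‖t - x i‖ := by
        refine (norm_add_le _ _).trans ?_
        rw [norm_smul, norm_smul, Real.norm_of_nonneg (by linarith), Real.norm_of_nonneg h0]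
    _ ≤ _ := by
        gcongr <;> first
          | linarith
          | exact Finset.le_sup' (fun j => ‖M - x j‖) (mem_univ i)
          | exact Finset.le_sup' (fun j => ‖t - x j‖) (mem_univ i)

set_option maxHeartbeats 1000000 in
/-- The centroid `M` is the quadratic min-power centre iff `M` is the 1-centre of `X`. -/
theorem centroid_eq_minPower_iff_one_centre
    {n : ℕ} [NeZero n] (x : Fin n → EuclideanSpace ℝ (Fin 2))
    (M : EuclideanSpace ℝ (Fin 2)) (hM : M = (n : ℝ)⁻¹ • ∑ i, x i)
    (P : EuclideanSpace ℝ (Fin 2) → ℝ)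
    (hP : ∀ s, P s = (∑ i, ‖s - x i‖ ^ 2) +
      Finset.univ.sup' Finset.univ_nonempty (fun i => ‖s - x i‖ ^ 2))
    (s : EuclideanSpace ℝ (Fin 2)) (hs : ∀ t, P s ≤ P t) :
    M = s ↔
      (∀ t : EuclideanSpace ℝ (Fin 2),
        Finset.univ.sup' Finset.univ_nonempty (fun i => ‖M - x i‖) ≤
        Finset.univ.sup' Finset.univ_nonempty (fun i => ‖t - x i‖)) := by
  set g : EuclideanSpace ℝ (Fin 2) → ℝ :=
    fun t => Finset.univ.sup' Finset.univ_nonempty (fun i => ‖t - x i‖) with hg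
  have hgnn : ∀ t, 0 ≤ g t := fun t =>
    le_trans (norm_nonneg _) (Finset.le_sup' (fun i => ‖t - x i‖) (mem_univ 0))
  have hP' : ∀ t, P t = (n : ℝ) * ‖t - M‖ ^ 2 + (∑ i, ‖M - x i‖ ^ 2) + g t ^ 2 := by
    intro t
    rw [hP, parallel_axis' x M hM t, sup_sq' (fun i => ‖t - x i‖) (fun i => norm_nonneg _)]
  constructor
  · -- M is the min-power centre → M is the 1-centre
    rintro rfl t
    by_contra hcon
    push_neg at hcon
    have hδ : 0 < g M ^ 2 - g t ^ 2 := by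
      have := hgnn t
      nlinarith
    set δ : ℝ := g M ^ 2 - g t ^ 2 with hδdef
    set d : ℝ := ‖t - M‖ ^ 2 with hd
    have hdnn : 0 ≤ d := sq_nonneg _
    have hnd : (0:ℝ) < n * d + 1 := by positivity
    set ε : ℝ := min 1 (δ / (2 * ((n : ℝ) * d + 1))) with hε
    have hε0 : 0 < ε := lt_min one_pos (by positivity)
    have hε1 : ε ≤ 1 := min_le_left _ _
    have hεd : ε * ((n : ℝ) * d) < δ := by
      have h2 : ε ≤ δ / (2 * ((n : ℝ) * d + 1)) := min_le_right _ _
      have h3 : ε * (2 * ((n : ℝ) * d + 1)) ≤ δ := by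
        rw [← le_div_iff₀ (by positivity)]; exact h2
      nlinarith [mul_nonneg hε0.le (mul_nonneg (Nat.cast_nonneg (α := ℝ) n) hdnn)]
    -- perturbed point
    set u := M + ε • (t - M) with hu
    have hgu : g u ≤ (1 - ε) * g M + ε * g t := conv_max' x M t ε hε0.le hε1
    have hgu2 : g u ^ 2 ≤ (1 - ε) * g M ^ 2 + ε * g t ^ 2 := by
      have h1 : g u ^ 2 ≤ ((1 - ε) * g M + ε * g t) ^ 2 :=
        pow_le_pow_left₀ (hgnn u) hgu 2
      have h2 : 0 ≤ ε * (1 - ε) * (g M - g t) ^ 2 :=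
        mul_nonneg (mul_nonneg hε0.le (by linarith)) (sq_nonneg _)
      nlinarith [h1, h2]
    have huM : ‖u - M‖ ^ 2 = ε ^ 2 * d := by
      rw [hu, hd]
      rw [add_sub_cancel_left, norm_smul, Real.norm_of_nonneg hε0.le, mul_pow]
    have hPu : P u ≤ P M + (n : ℝ) * (ε ^ 2 * d) - ε * δ := by
      rw [hP' u, hP' M, huM]
      have hMM : ‖M - M‖ ^ 2 = 0 := by rw [sub_self, norm_zero]; norm_num
      rw [hMM]
      have : (1 - ε) * g M ^ 2 + ε * g t ^ 2 = g M ^ 2 - ε * δ := by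
        rw [hδdef]; ring
      nlinarith [hgu2]
    have hlt : P u < P M := by
      have h1 : (n : ℝ) * (ε ^ 2 * d) ≤ ε * ((n : ℝ) * d) := by
        have : ε ^ 2 ≤ ε := by nlinarith
        calc (n : ℝ) * (ε ^ 2 * d) = ε ^ 2 * ((n : ℝ) * d) := by ring
          _ ≤ ε * ((n : ℝ) * d) := by
              apply mul_le_mul_of_nonneg_right this
              exact mul_nonneg (Nat.cast_nonneg n) hdnn
      nlinarith [mul_pos hε0 hδ]
    exact absurd (hs u) (not_le.2 hlt)
  · -- M is the 1-centre → M = s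
    intro h1c
    have hgMs : g M ≤ g s := h1c s
    have h1 : g M ^ 2 ≤ g s ^ 2 := pow_le_pow_left₀ (hgnn M) hgMs 2
    have hMM : ‖M - M‖ ^ 2 = 0 := by rw [sub_self, norm_zero]; norm_num
    have hnn : 0 ≤ (n : ℝ) * ‖s - M‖ ^ 2 :=
      mul_nonneg (Nat.cast_nonneg (α := ℝ) n) (sq_nonneg _)
    have hPs := hP' s
    have hPM := hP' M
    rw [hMM] at hPM
    have hQM : P M ≤ P s := by linarith
    have heq : P s = P M := le_antisymm (hs M) hQM
    have hz : (n : ℝ) * ‖s - M‖ ^ 2 = 0 := by linarith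
    have hn : (n : ℝ) ≠ 0 := Nat.cast_ne_zero.2 (NeZero.ne n)
    have hsM : ‖s - M‖ = 0 := by
      rcases mul_eq_zero.1 hz with h | h
      · exact absurd h hn
      · exact pow_eq_zero_iff two_ne_zero |>.1 h
    have : s - M = 0 := norm_eq_zero.1 hsM
    have : s = M := by rwa [sub_eq_zero] at this
    exact this.symm
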